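/- Let m, n ≥ 0 with m + n > 0, T₁, T₂ > 0, π ∈ ℝ, and set v₁ = σ(π)/T₁, v₂ = (1-σ(π))/T₂ where σ is the logistic sigmoid. If m > 0 and n > 0, then logit( m·v₁ / (m·v₁ + n·v₂) ) = logit( m/(m+n) ) - logit( T₁/(T₁+T₂) ) + π. -/

import Mathlib

lemma logit_frac (a b : ℝ) (ha : 0 < a) (hb : 0 < b) :
    Real.log ((a / (a + b)) / (1 - a / (a + b))) = Real.log a - Real.log b := by
  have hab : 0 < a + b := by linarith
  have h1 : 1 - a / (a + b) = b / (a + b) := by field_simp; ring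
  have h2 : (a / (a + b)) / (b / (a + b)) = a / b := by field_simp
  rw [h1, h2, Real.log_div ha.ne' hb.ne']

/-- Prior-independence identity (Theorem 5): with weights `v₁ = σ(π)/T₁`,
`v₂ = (1-σ(π))/T₂`, the logit of the weighted proportion satisfies
`logit(m v₁/(m v₁ + n v₂)) = logit(m/(m+n)) - logit(T₁/(T₁+T₂)) + π`. -/
theorem stmt16 (m n T₁ T₂ pr : ℝ) (hm : 0 < m) (hn : 0 < n)
    (hT₁ : 0 < T₁) (hT₂ : 0 < T₂)
    (v₁ v₂ : ℝ)
    (hv₁ : v₁ = (1 / (1 + Real.exp (-pr))) / T₁)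
    (hv₂ : v₂ = (1 - 1 / (1 + Real.exp (-pr))) / T₂) :
    Real.log ((m * v₁ / (m * v₁ + n * v₂)) / (1 - m * v₁ / (m * v₁ + n * v₂)))
      = Real.log ((m / (m + n)) / (1 - m / (m + n)))
        - Real.log ((T₁ / (T₁ + T₂)) / (1 - T₁ / (T₁ + T₂))) + pr := by
  have he : 0 < Real.exp (-pr) := Real.exp_pos _
  have hd : 0 < 1 + Real.exp (-pr) := by linarith
  have hσ : 0 < 1 / (1 + Real.exp (-pr)) := by positivity
  have hσ' : 0 < 1 - 1 / (1 + Real.exp (-pr)) := by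
    rw [sub_pos, div_lt_one hd]; linarith
  have hv1 : 0 < v₁ := by rw [hv₁]; positivity
  have hv2 : 0 < v₂ := by rw [hv₂]; positivity
  rw [logit_frac _ _ (by positivity) (by positivity),
      logit_frac _ _ hm hn, logit_frac _ _ hT₁ hT₂,
      hv₁, hv₂]
  have key : Real.log (1 / (1 + Real.exp (-pr))) -
      Real.log (1 - 1 / (1 + Real.exp (-pr))) = pr := by
    rw [← Real.log_div hσ.ne' hσ'.ne']
    have : (1 / (1 + Real.exp (-pr))) / (1 - 1 / (1 + Real.exp (-pr)))
        = Real.exp pr := by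
      rw [Real.exp_neg]
      field_simp
      ring
    rw [this, Real.log_exp]
  rw [Real.log_mul hm.ne' (by positivity), Real.log_mul hn.ne' (by positivity),
      Real.log_div hσ.ne' hT₁.ne', Real.log_div hσ'.ne' hT₂.ne']
  linarith
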